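/- Let k ≥ 1, S = {x ∈ ℝⁿ : x₁ = ⋯ = x_k = 0}, α the local real blow-down and π̃(((ε₁,r₁),…,(ε_k,r_k)), y) = (ε₁⋯ε_k, r₁⋯r_k). Then the restriction of α to the set α⁻¹(S) ∩ π̃⁻¹((1,0)) → S is a covering map, every fibre of which has exactly 2^{k−1} elements; it is homeomorphic over S to the trivial cover {ε ∈ {-1,1}^k : ε₁⋯ε_k = 1} × S. -/

import Mathlib

/-- The half-ray with signs `{-1,1} × [0,∞)` with its subspace (product) topology. -/
abbrev SignRay : Type := ({-1, 1} : Set ℝ) × (Set.Ici (0 : ℝ))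

/-- The local real blow-down
`α(((ε₁,r₁),…,(ε_k,r_k)), y) = (ε₁r₁, …, ε_k r_k, y)`. -/
def blowDownR (k m : ℕ) (p : (Fin k → SignRay) × (Fin m → ℝ)) :
    (Fin k → ℝ) × (Fin m → ℝ) :=
  (fun i => ((p.1 i).1 : ℝ) * ((p.1 i).2 : ℝ), p.2)

/-- The blown-up degeneration
`π̃(((ε₁,r₁),…,(ε_k,r_k)), y) = (ε₁⋯ε_k, r₁⋯r_k)`. -/
def tpiR (k m : ℕ) (p : (Fin k → SignRay) × (Fin m → ℝ)) : SignRay :=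
  (⟨∏ i, ((p.1 i).1 : ℝ), by
      refine Finset.prod_induction _ (fun x => x ∈ ({-1, 1} : Set ℝ)) ?_ ?_ ?_
      · rintro a b (ha | ha) (hb | hb) <;>
          simp_all [Set.mem_insert_iff, Set.mem_singleton_iff]
      · simp
      · exact fun i _ => (p.1 i).1.2⟩,
   ⟨∏ i, ((p.1 i).2 : ℝ), Set.mem_Ici.mpr (Finset.prod_nonneg fun i _ => (p.1 i).2.2)⟩)

/-- The positive special point `0⁺ = (1, 0) ∈ {-1,1} × [0,∞)`. -/
def posZero : SignRay := (⟨1, by norm_num⟩, ⟨0, Set.self_mem_Ici⟩)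

/-- The stratum `S = {x ∈ ℝⁿ : x₁ = ⋯ = x_k = 0}`. -/
def Sset (k m : ℕ) : Set ((Fin k → ℝ) × (Fin m → ℝ)) := {x | ∀ i, x.1 i = 0}

/-- The positive part `α⁻¹(S) ∩ π̃⁻¹((1,0))` of the blow-up over the stratum `S`. -/
def posPart (k m : ℕ) : Set ((Fin k → SignRay) × (Fin m → ℝ)) :=
  blowDownR k m ⁻¹' Sset k m ∩ tpiR k m ⁻¹' ({posZero} : Set SignRay)

/-- The restriction `α : α⁻¹(S) ∩ π̃⁻¹((1,0)) → S`. -/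
def posPartMap (k m : ℕ) : posPart k m → Sset k m :=
  fun q => ⟨blowDownR k m q.1, q.2.1⟩

-- auxiliary
lemma pmNeZero (x : ({-1,1} : Set ℝ)) : (x : ℝ) ≠ 0 := by
  rcases x.2 with h | h
  · norm_num [h]
  · rw [Set.mem_singleton_iff] at h; norm_num [h]

lemma pmMulSelf' (x : ℝ) (h : x ∈ ({-1,1} : Set ℝ)) : x * x = 1 := by
  rcases h with h | h
  · norm_num [h]
  · rw [Set.mem_singleton_iff] at h; norm_num [h]

lemma pmMulSelf (x : ({-1,1} : Set ℝ)) : (x : ℝ) * x = 1 := pmMulSelf' _ x.2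

lemma prodMem {n : ℕ} (g : Fin n → ({-1,1} : Set ℝ)) :
    ∏ i, (g i : ℝ) ∈ ({-1, 1} : Set ℝ) := by
  refine Finset.prod_induction _ (fun x => x ∈ ({-1, 1} : Set ℝ)) ?_ ?_ ?_
  · rintro a b (ha | ha) (hb | hb) <;> simp_all
  · simp
  · exact fun i _ => (g i).2

instance : Finite ({-1,1} : Set ℝ) := Set.Finite.to_subtype (Set.toFinite _)

abbrev SignFib (k : ℕ) : Type := {ε : Fin k → ({-1, 1} : Set ℝ) // ∏ i, (ε i : ℝ) = 1}

lemma mem_posPart {k m : ℕ} (hk : 1 ≤ k) (q : (Fin k → SignRay) × (Fin m → ℝ)) :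
    q ∈ posPart k m ↔ (∀ i, ((q.1 i).2 : ℝ) = 0) ∧ ∏ i, ((q.1 i).1 : ℝ) = 1 := by
  constructor
  · rintro ⟨h1, h2⟩
    have hr : ∀ i, ((q.1 i).2 : ℝ) = 0 := fun i =>
      (mul_eq_zero.1 (h1 i)).resolve_left (pmNeZero _)
    exact ⟨hr, congrArg (fun s : SignRay => (s.1 : ℝ)) h2⟩
  · rintro ⟨h1, h2⟩
    refine ⟨fun i => ?_, ?_⟩
    · show ((q.1 i).1 : ℝ) * ((q.1 i).2 : ℝ) = 0
      rw [h1 i, mul_zero]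
    have : ∏ i, ((q.1 i).2 : ℝ) = 0 := by
      refine Finset.prod_eq_zero (Finset.mem_univ (⟨0, hk⟩ : Fin k)) (h1 _)
    simp only [Set.mem_preimage, Set.mem_singleton_iff, tpiR, posZero, Prod.ext_iff]
    exact ⟨Subtype.ext h2, Subtype.ext this⟩

/-- the homeomorphism to the trivial cover -/
noncomputable def posPartHomeo (k m : ℕ) (hk : 1 ≤ k) :
    posPart k m ≃ₜ (SignFib k × Sset k m) where
  toFun q := (⟨fun i => (q.1.1 i).1, ((mem_posPart hk q.1).1 q.2).2⟩,
    ⟨blowDownR k m q.1, q.2.1⟩)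
  invFun p := ⟨((fun i => (p.1.1 i, ⟨0, Set.self_mem_Ici⟩)), p.2.1.2),
    (mem_posPart hk _).2 ⟨fun i => rfl, p.1.2⟩⟩
  left_inv q := by
    have hr := ((mem_posPart hk q.1).1 q.2).1
    ext x
    · rfl
    · exact (hr x).symm
    · rfl
  right_inv p := by
    refine Prod.ext (Subtype.ext rfl) (Subtype.ext (Prod.ext ?_ rfl))
    funext i
    simpa [blowDownR] using (p.2.2 i).symm
  continuous_toFun := by
    apply Continuous.prodMk
    · exact Continuous.subtype_mk (continuous_pi fun i =>
        ((continuous_apply i).comp (continuous_fst.comp continuous_subtype_val)).fst) _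
    · refine Continuous.subtype_mk ?_ _
      refine Continuous.prodMk (continuous_pi fun i => ?_)
        (continuous_snd.comp continuous_subtype_val)
      have hc : Continuous fun q : posPart k m => q.1.1 i :=
        (continuous_apply i).comp (continuous_fst.comp continuous_subtype_val)
      exact (continuous_subtype_val.comp hc.fst).mul (continuous_subtype_val.comp hc.snd)
  continuous_invFun := by
    refine Continuous.subtype_mk (Continuous.prodMk (continuous_pi fun i => ?_)
      (continuous_snd.comp (continuous_subtype_val.comp continuous_snd))) _
    exact Continuous.prodMk
      ((continuous_apply i).comp (continuous_subtype_val.comp continuous_fst)) continuous_const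

lemma posPartHomeo_snd (k m : ℕ) (hk : 1 ≤ k) (q : posPart k m) :
    (posPartHomeo k m hk q).2 = posPartMap k m q := rfl

noncomputable def posPartTriv (k m : ℕ) (hk : 1 ≤ k) :
    Bundle.Trivialization (SignFib k) (posPartMap k m) :=
  haveI : Nonempty (posPart k m) :=
    ⟨⟨((fun _ => (⟨1, by norm_num⟩, ⟨0, Set.self_mem_Ici⟩)), 0),
      (mem_posPart hk _).2 ⟨fun _ => rfl, by simp⟩⟩⟩
  { toOpenPartialHomeomorph :=
      ((posPartHomeo k m hk).trans (Homeomorph.prodComm _ _)).toOpenPartialHomeomorph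
    baseSet := Set.univ
    open_baseSet := isOpen_univ
    source_eq := by simp [Homeomorph.toOpenPartialHomeomorph]
    target_eq := by simp [Homeomorph.toOpenPartialHomeomorph]
    proj_toFun := fun p _ => rfl }

lemma signFib_card (k : ℕ) (hk : 1 ≤ k) : Nat.card (SignFib k) = 2 ^ (k - 1) := by
  obtain ⟨n, rfl⟩ : ∃ n, k = n + 1 := ⟨k - 1, (Nat.succ_pred_eq_of_pos hk).symm⟩
  have e : SignFib (n + 1) ≃ (Fin n → ({-1, 1} : Set ℝ)) :=
    { toFun := fun ε i => ε.1 i.castSucc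
      invFun := fun g =>
        ⟨Fin.snoc g ⟨∏ i, (g i : ℝ), prodMem g⟩, by
          rw [Fin.prod_univ_castSucc]
          simp only [Fin.snoc_castSucc, Fin.snoc_last]
          exact pmMulSelf' _ (prodMem g)⟩
      left_inv := fun ε => by
        have hlast : (ε.1 (Fin.last n) : ℝ) = ∏ i : Fin n, (ε.1 i.castSucc : ℝ) := by
          have h := ε.2
          rw [Fin.prod_univ_castSucc] at h
          have h2 := pmMulSelf (ε.1 (Fin.last n))
          calc (ε.1 (Fin.last n) : ℝ)
              = ((∏ i : Fin n, (ε.1 i.castSucc : ℝ)) * (ε.1 (Fin.last n) : ℝ))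
                * (ε.1 (Fin.last n) : ℝ) := by rw [h]; ring
            _ = (∏ i : Fin n, (ε.1 i.castSucc : ℝ)) *
                ((ε.1 (Fin.last n) : ℝ) * (ε.1 (Fin.last n) : ℝ)) := by ring
            _ = ∏ i : Fin n, (ε.1 i.castSucc : ℝ) := by rw [h2, mul_one]
        refine Subtype.ext (funext fun i => ?_)
        refine Fin.lastCases ?_ (fun j => ?_) i
        · simp only [Fin.snoc_last]
          exact Subtype.ext hlast.symm
        · simp [Fin.snoc_castSucc]
      right_inv := fun g => funext fun i => by simp [Fin.snoc_castSucc] }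
  have h2 : Nat.card ({-1, 1} : Set ℝ) = 2 := by
    rw [Nat.card_coe_set_eq, Set.ncard_pair (by norm_num)]
  rw [Nat.card_congr e, Nat.card_fun, h2, Nat.card_eq_fintype_card, Fintype.card_fin]
  simp


/-- Let `k ≥ 1`, `S = {x ∈ ℝⁿ : x₁ = ⋯ = x_k = 0}`, `α` the local real blow-down and
`π̃(((ε₁,r₁),…,(ε_k,r_k)), y) = (ε₁⋯ε_k, r₁⋯r_k)`. Then the restriction of `α` to
`α⁻¹(S) ∩ π̃⁻¹((1,0)) → S` is a covering map, every fibre of which has exactly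
`2^{k−1}` elements; it is homeomorphic over `S` to the trivial cover
`{ε ∈ {-1,1}^k : ε₁⋯ε_k = 1} × S`. -/
theorem posPartMap_cover (k m : ℕ) (hk : 1 ≤ k) :
    IsCoveringMap (posPartMap k m) ∧
    (∀ p : Sset k m,
      Nat.card ((posPartMap k m) ⁻¹' ({p} : Set (Sset k m))) = 2 ^ (k - 1)) ∧
    ∃ e : posPart k m ≃ₜ
        (({ε : Fin k → ({-1, 1} : Set ℝ) // ∏ i, (ε i : ℝ) = 1}) × (Sset k m)),
      ∀ q, (e q).2 = posPartMap k m q := by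
  refine ⟨?_, ?_, ⟨posPartHomeo k m hk, posPartHomeo_snd k m hk⟩⟩
  · intro x
    have h : IsEvenlyCovered (posPartMap k m) x (SignFib k) :=
      IsEvenlyCovered.of_trivialization (t := posPartTriv k m hk) (Set.mem_univ x)
    exact h.to_isEvenlyCovered_preimage
  · intro p
    have e : ((posPartMap k m) ⁻¹' ({p} : Set (Sset k m))) ≃ SignFib k :=
      { toFun := fun q => (posPartHomeo k m hk q.1).1
        invFun := fun ε => ⟨(posPartHomeo k m hk).symm (ε, p), by
          have : posPartMap k m ((posPartHomeo k m hk).symm (ε, p)) = p := by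
            rw [← posPartHomeo_snd k m hk, Homeomorph.apply_symm_apply]
          simp [Set.mem_preimage, this]⟩
        left_inv := fun q => by
          obtain ⟨q', hq'⟩ := q
          have hq : (posPartHomeo k m hk q').2 = p := by
            rw [posPartHomeo_snd]; exact hq'
          refine Subtype.ext ?_
          show (posPartHomeo k m hk).symm ((posPartHomeo k m hk q').1, p) = q'
          rw [← hq]
          simp
        right_inv := fun ε => by
          have : posPartMap k m ((posPartHomeo k m hk).symm (ε, p)) = p := by
            rw [← posPartHomeo_snd k m hk, Homeomorph.apply_symm_apply]
          simp }
    rw [Nat.card_congr e, signFib_card k hk]
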